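/- Let H be a nonempty set of probability measures on a measurable space (Ω, 𝒜) and let P : Ω → ℝ be a measurable function, with left-quantile T^Q_P(α) = inf{x ∈ ℝ : Q({P ≤ x}) ≥ α}. Then P is a precise p-variable for H, i.e. Q({P ≤ α}) ≤ α for all α ∈ (0,1) and Q ∈ H and moreover sup_{Q∈H} Q({P ≤ α}) = α for each α ∈ (0,1), if and only if inf_{Q∈H} T^Q_P(α) = α for all α ∈ (0,1). -/

import Mathlib

open MeasureTheory Set Filter Topology

/-- Left-quantile function of a random variable `P` under a measure `Q`:
`T^Q_P(α) = inf {x : Q(P ≤ x) ≥ α}`. -/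
noncomputable def leftQuantile {Ω : Type*} [MeasurableSpace Ω]
    (Q : Measure Ω) (P : Ω → ℝ) (α : ℝ) : ℝ :=
  sInf {x : ℝ | α ≤ (Q {ω | P ω ≤ x}).toReal}

section aux
variable {Ω : Type*} [MeasurableSpace Ω]

lemma F_mono (Q : Measure Ω) [IsProbabilityMeasure Q] (P : Ω → ℝ) {x y : ℝ} (h : x ≤ y) :
    (Q {ω | P ω ≤ x}).toReal ≤ (Q {ω | P ω ≤ y}).toReal :=
  ENNReal.toReal_mono (measure_ne_top Q _) (measure_mono fun ω hω => le_trans hω h)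

lemma F_exists_ge (Q : Measure Ω) [IsProbabilityMeasure Q] (P : Ω → ℝ) {α : ℝ} (hα : α < 1) :
    ∃ x : ℝ, α ≤ (Q {ω | P ω ≤ x}).toReal := by
  have hmono : Monotone (fun n : ℕ => {ω | P ω ≤ (n : ℝ)}) := by
    intro m n hmn ω hω
    exact le_trans hω ((Nat.cast_le (α := ℝ)).mpr hmn)
  have hU : (⋃ n : ℕ, {ω | P ω ≤ (n : ℝ)}) = univ := by
    ext ω
    simp only [mem_iUnion, mem_univ, iff_true, mem_setOf_eq]
    exact exists_nat_ge (P ω)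
  have h1 : Tendsto (fun n : ℕ => Q {ω | P ω ≤ (n : ℝ)}) atTop (𝓝 1) := by
    have := tendsto_measure_iUnion_atTop (μ := Q) hmono
    rw [hU, measure_univ] at this
    exact this
  have h2 : Tendsto (fun n : ℕ => (Q {ω | P ω ≤ (n : ℝ)}).toReal) atTop (𝓝 1) := by
    have := (ENNReal.tendsto_toReal (by simp : (1 : ENNReal) ≠ ⊤)).comp h1
    exact this
  obtain ⟨n, hn⟩ := (h2.eventually_const_le hα).exists
  exact ⟨n, hn⟩

/-- If `F_Q(β) ≤ β` on `(0,1)`, then every element of the level set at `α` is `≥ α`. -/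
lemma levelSet_subset_Ici (Q : Measure Ω) [IsProbabilityMeasure Q] (P : Ω → ℝ) {α : ℝ}
    (hα : α ∈ Ioo (0:ℝ) 1)
    (hvalid : ∀ β ∈ Ioo (0:ℝ) 1, (Q {ω | P ω ≤ β}).toReal ≤ β) :
    {x : ℝ | α ≤ (Q {ω | P ω ≤ x}).toReal} ⊆ Ici α := by
  intro x hx
  by_contra hlt
  rw [mem_Ici] at hlt
  push_neg at hlt
  set β := max x (α / 2) with hβdef
  have hβ1 : β < α := max_lt hlt (by linarith [hα.1])
  have hβmem : β ∈ Ioo (0:ℝ) 1 := ⟨lt_max_of_lt_right (by linarith [hα.1]), by linarith [hα.2]⟩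
  have : α ≤ (Q {ω | P ω ≤ β}).toReal := le_trans hx (F_mono Q P (le_max_left _ _))
  have := hvalid β hβmem
  linarith

lemma quantile_ge (Q : Measure Ω) [IsProbabilityMeasure Q] (P : Ω → ℝ) {α : ℝ}
    (hα : α ∈ Ioo (0:ℝ) 1)
    (hvalid : ∀ β ∈ Ioo (0:ℝ) 1, (Q {ω | P ω ≤ β}).toReal ≤ β) :
    α ≤ leftQuantile Q P α := by
  have hne : {x : ℝ | α ≤ (Q {ω | P ω ≤ x}).toReal}.Nonempty := F_exists_ge Q P hα.2
  exact le_csInf hne fun x hx => levelSet_subset_Ici Q P hα hvalid hx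

/-- `leftQuantile Q P α ≤ x` whenever `α ≤ F_Q(x)` and `α > 0` and `x ≥ 0`...
Actually: if `α ≤ F_Q(x)` then `leftQuantile Q P α ≤ max x 0`. -/
lemma quantile_le (Q : Measure Ω) (P : Ω → ℝ) {α x : ℝ} (hx0 : 0 ≤ x)
    (hx : α ≤ (Q {ω | P ω ≤ x}).toReal) :
    leftQuantile Q P α ≤ x := by
  by_cases hbdd : BddBelow {y : ℝ | α ≤ (Q {ω | P ω ≤ y}).toReal}
  · exact csInf_le hbdd hx
  · rw [leftQuantile, Real.sInf_def, Real.sSup_def]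
    rw [dif_neg]
    · simpa using hx0
    · rintro ⟨h1, h2⟩
      exact hbdd (by obtain ⟨M, hM⟩ := h2; exact ⟨-M, fun y hy => by have := @hM (-y) (by simpa using hy); linarith⟩)

end aux

/-- `P` is a precise p-variable for `H` (valid and
`sup_{Q ∈ H} Q(P ≤ α) = α` for each `α ∈ (0,1)`) iff
`inf_{Q ∈ H} T^Q_P(α) = α` for all `α ∈ (0,1)`. -/
theorem stmt_2 {Ω : Type*} [MeasurableSpace Ω] (H : Set (Measure Ω)) (hHne : H.Nonempty)
    (hprob : ∀ Q ∈ H, IsProbabilityMeasure Q)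
    (P : Ω → ℝ) (hP : Measurable P) :
    ((∀ Q ∈ H, ∀ α ∈ Ioo (0:ℝ) 1, (Q {ω | P ω ≤ α}).toReal ≤ α) ∧
      (∀ α ∈ Ioo (0:ℝ) 1,
        IsLUB {r : ℝ | ∃ Q ∈ H, r = (Q {ω | P ω ≤ α}).toReal} α)) ↔
      (∀ α ∈ Ioo (0:ℝ) 1,
        IsGLB {r : ℝ | ∃ Q ∈ H, r = leftQuantile Q P α} α) := by
  constructor
  · rintro ⟨hvalid, hlub⟩ α hα
    constructor
    · -- α is a lower bound of the quantiles
      rintro r ⟨Q, hQ, rfl⟩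
      have := hprob Q hQ
      exact quantile_ge Q P hα (fun β hβ => hvalid Q hQ β hβ)
    · -- α is the greatest lower bound
      intro b hb
      by_contra hba
      push_neg at hba
      obtain ⟨β, hβ1, hβ2⟩ : ∃ β, α < β ∧ β < min b 1 :=
        exists_between (lt_min hba hα.2)
      have hβmem : β ∈ Ioo (0:ℝ) 1 := ⟨lt_trans hα.1 hβ1, lt_of_lt_of_le hβ2 (min_le_right _ _)⟩
      -- from the LUB at β, some Q has F_Q(β) > α
      obtain ⟨Q, hQ, hQα⟩ : ∃ Q ∈ H, α < (Q {ω | P ω ≤ β}).toReal := by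
        by_contra hcon
        push_neg at hcon
        have : β ≤ α := (hlub β hβmem).2 (by rintro r ⟨Q, hQ, rfl⟩; exact hcon Q hQ)
        linarith
      have := hprob Q hQ
      have hle : leftQuantile Q P α ≤ β :=
        quantile_le Q P (le_of_lt (lt_trans hα.1 hβ1)) hQα.le
      have hbQ : b ≤ leftQuantile Q P α := hb ⟨Q, hQ, rfl⟩
      have : β < b := lt_of_lt_of_le hβ2 (min_le_left _ _)
      linarith
  · intro hglb
    have hvalid : ∀ Q ∈ H, ∀ α ∈ Ioo (0:ℝ) 1, (Q {ω | P ω ≤ α}).toReal ≤ α := by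
      intro Q hQ α hα
      have := hprob Q hQ
      by_contra hcon
      push_neg at hcon
      obtain ⟨β, hβ1, hβ2⟩ : ∃ β, α < β ∧ β < min ((Q {ω | P ω ≤ α}).toReal) 1 :=
        exists_between (lt_min hcon hα.2)
      have hβmem : β ∈ Ioo (0:ℝ) 1 := ⟨lt_trans hα.1 hβ1, lt_of_lt_of_le hβ2 (min_le_right _ _)⟩
      have h1 : leftQuantile Q P β ≤ α :=
        quantile_le Q P hα.1.le (le_of_lt (lt_of_lt_of_le hβ2 (min_le_left _ _)))
      have h2 : β ≤ leftQuantile Q P β := (hglb β hβmem).1 ⟨Q, hQ, rfl⟩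
      linarith
    refine ⟨hvalid, fun α hα => ⟨?_, ?_⟩⟩
    · rintro r ⟨Q, hQ, rfl⟩
      exact hvalid Q hQ α hα
    · intro b hb
      by_contra hba
      push_neg at hba
      set β := (max b 0 + α) / 2 with hβdef
      have hmax : max b 0 < α := max_lt hba hα.1
      have hβb : b < β := lt_of_le_of_lt (le_max_left b 0) (by rw [hβdef]; linarith)
      have hβα : β < α := by rw [hβdef]; linarith
      have hβ0 : 0 < β := lt_of_le_of_lt (le_max_right b 0) (by rw [hβdef]; linarith [hα.1]) |>.trans_le (le_refl _)
      have hβmem : β ∈ Ioo (0:ℝ) 1 := ⟨hβ0, lt_trans hβα hα.2⟩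
      -- α is a lower bound of {leftQuantile Q P β}
      have hlow : ∀ Q ∈ H, α ≤ leftQuantile Q P β := by
        intro Q hQ
        have := hprob Q hQ
        have hne : {x : ℝ | β ≤ (Q {ω | P ω ≤ x}).toReal}.Nonempty :=
          F_exists_ge Q P hβmem.2
        refine le_csInf hne fun x hx => ?_
        by_contra hxα
        push_neg at hxα
        have hFx : (Q {ω | P ω ≤ x}).toReal ≤ (Q {ω | P ω ≤ α}).toReal :=
          F_mono Q P hxα.le
        have hFα : (Q {ω | P ω ≤ α}).toReal ≤ b := hb ⟨Q, hQ, rfl⟩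
        have : β ≤ b := le_trans hx (le_trans hFx hFα)
        linarith
      have : α ≤ β := (hglb β hβmem).2 (by rintro r ⟨Q, hQ, rfl⟩; exact hlow Q hQ)
      linarith
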